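/- arXiv:math/0703338 — 3 statements merged into one kernel-verified Lean document; each statement's English description precedes it below -/
import Mathlib

section
/- The number of Temperley-Lieb half-diagrams on N points with n through lines and no boundary connections (equivalently, sequences of N symbols from {'(', ')'} with an excess of n closing parentheses such that at every position the number of ')' to the right is at least the number of '(' to the right) equals B_{N,n} - B_{N,n+2}, where B_{m,k} = \binom{m}{(m-k)/2}. -/
open Finset

/-- `B m k = binom(m, (m-k)/2)`, interpreted as `0` when `(m-k)/2` is not a
nonnegative integer (i.e. when `k > m` or `m - k` is odd). -/
def ballotB (m k : ℕ) : ℕ :=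
  if k ≤ m ∧ (m - k) % 2 = 0 then Nat.choose m ((m - k) / 2) else 0

def tlPred (N n : ℕ) (f : Fin N → Bool) : Prop :=
  (Finset.univ.filter (fun i => f i = true)).card
    = (Finset.univ.filter (fun i => f i = false)).card + n ∧
  ∀ p : Fin N,
    (Finset.univ.filter (fun i => p ≤ i ∧ f i = false)).card
      ≤ (Finset.univ.filter (fun i => p ≤ i ∧ f i = true)).card

instance (N n : ℕ) : DecidablePred (tlPred N n) := fun f => by
  unfold tlPred; infer_instance

def tlCount (N n : ℕ) : ℕ := (Finset.univ.filter (tlPred N n)).card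

lemma cnt_cons {N : ℕ} (b : Bool) (g : Fin N → Bool) (c : Bool) :
    (Finset.univ.filter (fun i : Fin (N+1) => (Fin.cons b g : Fin (N+1) → Bool) i = c)).card
      = (if b = c then 1 else 0) + (Finset.univ.filter (fun i => g i = c)).card := by
  rw [Finset.card_filter, Finset.card_filter, Fin.sum_univ_succ]
  simp [Fin.cons_zero, Fin.cons_succ]

lemma suf_cons_succ {N : ℕ} (b : Bool) (g : Fin N → Bool) (q : Fin N) (c : Bool) :
    (Finset.univ.filter (fun i : Fin (N+1) => q.succ ≤ i ∧ (Fin.cons b g : Fin (N+1) → Bool) i = c)).card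
      = (Finset.univ.filter (fun j : Fin N => q ≤ j ∧ g j = c)).card := by
  rw [Finset.card_filter, Finset.card_filter, Fin.sum_univ_succ]
  have h0 : ¬ (q.succ ≤ (0 : Fin (N+1))) := by
    simp [Fin.le_def]
  simp [h0, Fin.succ_le_succ_iff, Fin.cons_succ]

lemma suf_zero {N : ℕ} (f : Fin (N+1) → Bool) (c : Bool) :
    (Finset.univ.filter (fun i : Fin (N+1) => (0 : Fin (N+1)) ≤ i ∧ f i = c)).card
      = (Finset.univ.filter (fun i => f i = c)).card := by
  simp [Fin.zero_le]

lemma pred_cons_iff {N n : ℕ} (b : Bool) (g : Fin N → Bool) :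
    tlPred (N+1) n (Fin.cons b g) ↔
      ((Finset.univ.filter (fun i => g i = true)).card + (if b then 1 else 0)
          = (Finset.univ.filter (fun i => g i = false)).card + (if b then 0 else 1) + n) ∧
      ∀ q : Fin N,
        (Finset.univ.filter (fun j => q ≤ j ∧ g j = false)).card
          ≤ (Finset.univ.filter (fun j => q ≤ j ∧ g j = true)).card := by
  constructor
  · rintro ⟨hc, hs⟩
    refine ⟨?_, fun q => ?_⟩
    · rw [cnt_cons, cnt_cons] at hc
      cases b <;> simpa [Nat.add_comm] using hc
    · have := hs q.succ
      rwa [suf_cons_succ, suf_cons_succ] at this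
  · rintro ⟨hc, hs⟩
    refine ⟨?_, fun p => ?_⟩
    · rw [cnt_cons, cnt_cons]
      cases b <;> simp at hc ⊢ <;> omega
    · refine Fin.cases ?_ (fun q => ?_) p
      · rw [suf_zero, suf_zero, cnt_cons, cnt_cons]
        cases b <;> simp at hc ⊢ <;> omega
      · rw [suf_cons_succ, suf_cons_succ]
        exact hs q

lemma card_piece {N : ℕ} (P : (Fin (N+1) → Bool) → Prop) [DecidablePred P] (b : Bool) :
    (Finset.univ.filter (fun f => P f ∧ f 0 = b)).card
      = (Finset.univ.filter (fun g : Fin N → Bool => P (Fin.cons b g))).card := by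
  refine Finset.card_bij' (fun f _ => Fin.tail f) (fun g _ => Fin.cons b g) ?_ ?_ ?_ ?_
  · intro f hf
    simp only [Finset.mem_filter, Finset.mem_univ, true_and] at hf ⊢
    have hcs : Fin.cons (f 0) (Fin.tail f) = f := Fin.cons_self_tail f
    rw [hf.2] at hcs
    rw [hcs]
    exact hf.1
  · intro g hg
    simp only [Finset.mem_filter, Finset.mem_univ, true_and] at hg ⊢
    exact ⟨hg, Fin.cons_zero _ _⟩
  · intro f hf
    simp only [Finset.mem_filter, Finset.mem_univ, true_and] at hf
    have hcs : Fin.cons (f 0) (Fin.tail f) = f := Fin.cons_self_tail f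
    rw [hf.2] at hcs
    exact hcs
  · intro g hg
    exact Fin.tail_cons _ _

lemma tlCount_split (N n : ℕ) :
    tlCount (N+1) n
      = (Finset.univ.filter (fun g : Fin N → Bool => tlPred (N+1) n (Fin.cons true g))).card
        + (Finset.univ.filter (fun g : Fin N → Bool => tlPred (N+1) n (Fin.cons false g))).card := by
  rw [← card_piece (tlPred (N+1) n) true, ← card_piece (tlPred (N+1) n) false]
  rw [tlCount]
  have := Finset.card_filter_add_card_filter_not
    (s := Finset.univ.filter (tlPred (N+1) n)) (p := fun f => f 0 = true)
  rw [Finset.filter_filter, Finset.filter_filter] at this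
  rw [← this]
  congr 2
  all_goals first
    | rfl
    | (apply Finset.filter_congr; intro f _; simp)

lemma tlCount_succ_zero (N : ℕ) : tlCount (N+1) 0 = tlCount N 1 := by
  rw [tlCount_split]
  have h1 : (Finset.univ.filter (fun g : Fin N → Bool => tlPred (N+1) 0 (Fin.cons true g))) = ∅ := by
    rw [Finset.filter_eq_empty_iff]
    intro g _
    rw [pred_cons_iff]
    rintro ⟨hc, hs⟩
    simp only [if_true] at hc
    cases N with
    | zero => simp at hc
    | succ M =>
      have := hs 0
      rw [suf_zero, suf_zero] at this
      omega
  have h2 : (Finset.univ.filter (fun g : Fin N → Bool => tlPred (N+1) 0 (Fin.cons false g)))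
      = Finset.univ.filter (tlPred N 1) := by
    apply Finset.filter_congr
    intro g _
    rw [pred_cons_iff]
    unfold tlPred
    constructor
    · rintro ⟨hc, hs⟩; exact ⟨by simp at hc; omega, hs⟩
    · rintro ⟨hc, hs⟩; exact ⟨by simp; omega, hs⟩
  rw [h1, h2]
  simp [tlCount]

lemma tlCount_succ_succ (N m : ℕ) : tlCount (N+1) (m+1) = tlCount N m + tlCount N (m+2) := by
  rw [tlCount_split]
  have h1 : (Finset.univ.filter (fun g : Fin N → Bool => tlPred (N+1) (m+1) (Fin.cons true g)))
      = Finset.univ.filter (tlPred N m) := by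
    apply Finset.filter_congr
    intro g _
    rw [pred_cons_iff]
    unfold tlPred
    constructor
    · rintro ⟨hc, hs⟩; exact ⟨by simp at hc; omega, hs⟩
    · rintro ⟨hc, hs⟩; exact ⟨by simp; omega, hs⟩
  have h2 : (Finset.univ.filter (fun g : Fin N → Bool => tlPred (N+1) (m+1) (Fin.cons false g)))
      = Finset.univ.filter (tlPred N (m+2)) := by
    apply Finset.filter_congr
    intro g _
    rw [pred_cons_iff]
    unfold tlPred
    constructor
    · rintro ⟨hc, hs⟩; exact ⟨by simp at hc; omega, hs⟩
    · rintro ⟨hc, hs⟩; exact ⟨by simp; omega, hs⟩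
  rw [h1, h2]; rfl

lemma tlCount_zero (n : ℕ) : tlCount 0 n = if n = 0 then 1 else 0 := by
  cases n with
  | zero =>
    rw [tlCount]
    rw [Finset.filter_true_of_mem]
    · simp
    · intro f _
      constructor
      · simp [Finset.filter_eq_empty_iff]
      · exact fun p => p.elim0
  | succ m =>
    rw [tlCount, Finset.filter_eq_empty_iff.2, Finset.card_empty]
    · simp
    intro f _
    rintro ⟨hc, -⟩
    have h1 : (Finset.univ.filter (fun i : Fin 0 => f i = true)) = ∅ := by
      apply Finset.eq_empty_of_forall_notMem; intro x; exact x.elim0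
    have h2 : (Finset.univ.filter (fun i : Fin 0 => f i = false)) = ∅ := by
      apply Finset.eq_empty_of_forall_notMem; intro x; exact x.elim0
    rw [h1, h2] at hc
    simp at hc

lemma ballotB_pascal (N k : ℕ) :
    ballotB (N+1) (k+1) = ballotB N k + ballotB N (k+2) := by
  unfold ballotB
  rcases Nat.lt_or_ge N k with h | h
  · rw [if_neg (by omega), if_neg (by omega), if_neg (by omega)]
  rcases Nat.even_or_odd (N - k) with ⟨j, hj⟩ | ⟨j, hj⟩
  · -- N = k + 2j
    have hN : N = k + 2 * j := by omega
    subst hN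
    cases j with
    | zero =>
      rw [if_pos (by omega), if_pos (by omega), if_neg (by omega)]
      simp
    | succ i =>
      rw [if_pos (by omega), if_pos (by omega), if_pos (by omega)]
      have e1 : (k + 2 * (i+1) + 1 - (k+1)) / 2 = i + 1 := by omega
      have e2 : (k + 2 * (i+1) - k) / 2 = i + 1 := by omega
      have e3 : (k + 2 * (i+1) - (k+2)) / 2 = i := by omega
      rw [e1, e2, e3, Nat.choose_succ_succ]
      simp only [Nat.succ_eq_add_one]
      omega
  · rw [if_neg (by omega), if_neg (by omega), if_neg (by omega)]

lemma ballotB_zero_succ (N : ℕ) : ballotB (N+1) 0 = 2 * ballotB N 1 := by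
  unfold ballotB
  rcases Nat.even_or_odd N with ⟨m, hm⟩ | ⟨m, hm⟩
  · rw [if_neg (by omega), if_neg (by omega)]
  · subst hm
    rw [if_pos (by omega), if_pos (by omega)]
    have e1 : (2 * m + 1 + 1 - 0) / 2 = m + 1 := by omega
    have e2 : (2 * m + 1 - 1) / 2 = m := by omega
    rw [e1, e2]
    have : (2 * m + 1 + 1) = (2 * m + 1) + 1 := rfl
    rw [this, Nat.choose_succ_succ, Nat.choose_symm_half]
    omega

lemma ballotB_zero_zero : ballotB 0 0 = 1 := by simp [ballotB]

lemma ballotB_zero_big (n : ℕ) : ballotB 0 (n+1) = 0 := by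
  simp [ballotB]

lemma tl_main (N : ℕ) : ∀ n, tlCount N n + ballotB N (n+2) = ballotB N n := by
  induction N with
  | zero =>
    intro n
    rw [tlCount_zero]
    cases n with
    | zero => simp [ballotB_zero_zero, ballotB_zero_big]
    | succ m => simp [ballotB_zero_big]
  | succ N ih =>
    intro n
    cases n with
    | zero =>
      rw [tlCount_succ_zero, ballotB_zero_succ]
      have h1 : tlCount N 1 + ballotB N (1+2) = ballotB N 1 := ih 1
      have hp : ballotB (N+1) (0+2) = ballotB N 1 + ballotB N (1+2) := ballotB_pascal N 1
      omega
    | succ m =>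
      rw [tlCount_succ_succ]
      have h1 : tlCount N m + ballotB N (m+2) = ballotB N m := ih m
      have h2 : tlCount N (m+2) + ballotB N (m+2+2) = ballotB N (m+2) := ih (m+2)
      have hp1 : ballotB (N+1) (m+1) = ballotB N m + ballotB N (m+2) := ballotB_pascal N m
      have hp2 : ballotB (N+1) (m+1+2) = ballotB N (m+2) + ballotB N (m+2+2) := ballotB_pascal N (m+2)
      omega

/-- The number of sequences of `N` symbols from `{'(', ')'}` (encoded as
`f : Fin N → Bool`, `true` = `')'`, `false` = `'('`) with an excess of `n`
closing parentheses, such that at every position the number of `')'` to the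
right (including that position) is at least the number of `'('` to the right,
equals `B_{N,n} - B_{N,n+2}`. -/
theorem tl_halfdiagram_count (N n : ℕ) (hn : n ≤ N) (hpar : (N - n) % 2 = 0) :
    (Finset.univ.filter (fun f : Fin N → Bool =>
        (Finset.univ.filter (fun i => f i = true)).card
          = (Finset.univ.filter (fun i => f i = false)).card + n ∧
        ∀ p : Fin N,
          (Finset.univ.filter (fun i => p ≤ i ∧ f i = false)).card
            ≤ (Finset.univ.filter (fun i => p ≤ i ∧ f i = true)).card)).card
      = ballotB N n - ballotB N (n + 2) := by
  have h := tl_main N n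
  have e : tlCount N n = ballotB N n - ballotB N (n + 2) := by omega
  exact e
end

section
/- The number of sequences of N symbols from {'(', ')'} with an excess of n closing parentheses over opening parentheses equals \binom{N}{(N-n)/2} when N - n is even; and the number of one-boundary half-diagrams of length N with n through lines (allowing left-boundary connections but no right-boundary connections) equals B_{N,n} for N-n even and B_{N,n+1} for N-n odd, where B_{m,k}=\binom{m}{(m-k)/2}. -/
/-- Validity of a one-boundary half-diagram read as a list of symbols
(`0` = `'('`, `1` = `')'`, `2` = `'|'` a through line), processed with a state
consisting of the number `p` of currently open `'('`s and a flag `s` recording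
whether a through line has been seen.  A `')'` with no open `'('` attaches to
the left boundary (allowed only if no through line has occurred earlier, since
the connection would cross it); a through line is allowed only when no `'('`
is open; at the end every `'('` must be matched. -/
def validOBD : List (Fin 3) → ℕ → Bool → Bool
  | [], p, _ => p == 0
  | c :: t, p, s =>
    if c = 0 then validOBD t (p + 1) s
    else if c = 1 then
      match p with
      | 0 => !s && validOBD t 0 s
      | p' + 1 => validOBD t p' s
    else
      match p with
      | 0 => validOBD t 0 true
      | _ + 1 => false

lemma ballotB_anti (N k : ℕ) : ballotB N (k + 2) ≤ ballotB N k := by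
  unfold ballotB
  split_ifs with h1 h2 h2
  · have h3 : (N - (k + 2)) / 2 + 1 = (N - k) / 2 := by omega
    rw [← h3]
    exact Nat.choose_le_succ_of_lt_half_left (by omega)
  · omega
  · exact Nat.zero_le _
  · exact Nat.zero_le _

lemma ballotB_zero_of (N k : ℕ) (h : ¬(k ≤ N ∧ (N - k) % 2 = 0)) : ballotB N k = 0 := by
  unfold ballotB; rw [if_neg h]

lemma pascalB (N k : ℕ) (hk : 1 ≤ k) :
    ballotB (N + 1) k = ballotB N (k + 1) + ballotB N (k - 1) := by
  unfold ballotB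
  by_cases hA : k ≤ N + 1 ∧ (N + 1 - k) % 2 = 0
  · rw [if_pos hA]
    by_cases hB : k = N + 1
    · subst hB
      rw [if_neg (by omega), if_pos (by omega)]
      have : N + 1 - (N + 1) = 0 := by omega
      have h2 : N - (N + 1 - 1) = 0 := by omega
      simp [this, h2]
    · have hkN : k + 1 ≤ N := by omega
      rw [if_pos (by omega), if_pos (by omega)]
      have e1 : (N + 1 - k) / 2 = (N - (k + 1)) / 2 + 1 := by omega
      have e2 : (N - (k - 1)) / 2 = (N - (k + 1)) / 2 + 1 := by omega
      rw [e1, e2, Nat.choose_succ_succ']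
  · rw [if_neg hA, if_neg (by omega), if_neg (by omega)]

lemma pascalB0 (N : ℕ) : ballotB (N + 1) 0 = 2 * ballotB N 1 := by
  unfold ballotB
  rcases Nat.even_or_odd N with he | ho
  · obtain ⟨m, hm⟩ := he; subst hm
    rw [if_neg (by omega), if_neg (by omega)]
  · obtain ⟨m, hm⟩ := ho; subst hm
    rw [if_pos (by omega), if_pos (by omega)]
    have e1 : (2 * m + 1 + 1 - 0) / 2 = m + 1 := by omega
    have e2 : (2 * m + 1 - 1) / 2 = m := by omega
    rw [e1, e2, Nat.choose_succ_succ', Nat.choose_symm_half]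
    ring

def D : ℕ → ℕ → ℕ → Bool → ℕ
  | 0, n, p, _ => if n = 0 ∧ p = 0 then 1 else 0
  | N + 1, n, p, s =>
      D N n (p + 1) s
      + (match p with
         | 0 => if s then 0 else D N n 0 s
         | p' + 1 => D N n p' s)
      + (match p, n with
         | 0, n' + 1 => D N n' 0 true
         | _, _ => 0)

lemma Dclosed : ∀ N p n, (D N n p true = ballotB N (p + n) - ballotB N (p + n + 2)) ∧
    (D N n p false = ballotB N (p + n) + ballotB N (p + n + 1)) := by
  intro N
  induction N with
  | zero =>
    intro p n
    constructor <;> simp only [D, ballotB] <;> split_ifs <;> simp_all <;> omega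
  | succ N IH =>
    intro p n
    constructor
    · rcases p with _ | p
      · rcases n with _ | n
        · simp only [D]; norm_num
          have h1 := (IH 1 0).1
          norm_num at h1
          have m1 := ballotB_anti N 1
          norm_num at m1
          have q0 := pascalB0 N
          have q2 := pascalB N 2 (by omega)
          norm_num at q2
          rw [h1]; omega
        · simp only [D]; norm_num
          have h1 := (IH 1 (n + 1)).1
          rw [show 1 + (n + 1) = n + 2 by omega] at h1
          rw [show n + 2 + 2 = n + 4 by omega] at h1
          have h2 := (IH 0 n).1
          rw [show 0 + n = n by omega] at h2
          have q1 := pascalB N (n + 1) (by omega)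
          rw [show n + 1 + 1 = n + 2 by omega, show n + 1 - 1 = n by omega] at q1
          have q2 := pascalB N (n + 3) (by omega)
          rw [show n + 3 + 1 = n + 4 by omega, show n + 3 - 1 = n + 2 by omega] at q2
          have m1 := ballotB_anti N n
          have m2 := ballotB_anti N (n + 2)
          rw [show n + 2 + 2 = n + 4 by omega] at m2
          rw [show n + 1 + 2 = n + 3 by omega, h1, h2]
          omega
      · simp only [D]; norm_num
        have h1 := (IH (p + 1 + 1) n).1
        rw [show p + 1 + 1 + n = p + n + 2 by omega] at h1
        rw [show p + n + 2 + 2 = p + n + 4 by omega] at h1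
        have h2 := (IH p n).1
        have q1 := pascalB N (p + n + 1) (by omega)
        rw [show p + n + 1 + 1 = p + n + 2 by omega, show p + n + 1 - 1 = p + n by omega] at q1
        have q2 := pascalB N (p + n + 3) (by omega)
        rw [show p + n + 3 + 1 = p + n + 4 by omega, show p + n + 3 - 1 = p + n + 2 by omega] at q2
        have m1 := ballotB_anti N (p + n)
        have m2 := ballotB_anti N (p + n + 2)
        rw [show p + n + 2 + 2 = p + n + 4 by omega] at m2
        rw [show p + 1 + n = p + n + 1 by omega, show p + n + 1 + 2 = p + n + 3 by omega, h1, h2]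
        omega
    · rcases p with _ | p
      · rcases n with _ | n
        · simp only [D]; norm_num
          have h1 := (IH 1 0).2
          norm_num at h1
          have h2 := (IH 0 0).2
          norm_num at h2
          have q0 := pascalB0 N
          have q1 := pascalB N 1 (by omega)
          norm_num at q1
          rw [h1, h2]; omega
        · simp only [D]; norm_num
          have h1 := (IH 1 (n + 1)).2
          rw [show 1 + (n + 1) = n + 2 by omega] at h1
          rw [show n + 2 + 1 = n + 3 by omega] at h1
          have h2 := (IH 0 (n + 1)).2
          rw [show 0 + (n + 1) = n + 1 by omega] at h2
          rw [show n + 1 + 1 = n + 2 by omega] at h2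
          have h3 := (IH 0 n).1
          rw [show 0 + n = n by omega] at h3
          have q1 := pascalB N (n + 1) (by omega)
          rw [show n + 1 + 1 = n + 2 by omega, show n + 1 - 1 = n by omega] at q1
          have q2 := pascalB N (n + 2) (by omega)
          rw [show n + 2 + 1 = n + 3 by omega, show n + 2 - 1 = n + 1 by omega] at q2
          have m1 := ballotB_anti N n
          rw [show n + 1 + 1 = n + 2 by omega, h1, h2, h3]
          omega
      · simp only [D]; norm_num
        have h1 := (IH (p + 1 + 1) n).2
        rw [show p + 1 + 1 + n = p + n + 2 by omega] at h1
        rw [show p + n + 2 + 1 = p + n + 3 by omega] at h1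
        have h2 := (IH p n).2
        have q1 := pascalB N (p + n + 1) (by omega)
        rw [show p + n + 1 + 1 = p + n + 2 by omega, show p + n + 1 - 1 = p + n by omega] at q1
        have q2 := pascalB N (p + n + 2) (by omega)
        rw [show p + n + 2 + 1 = p + n + 3 by omega, show p + n + 2 - 1 = p + n + 1 by omega] at q2
        rw [show p + 1 + n = p + n + 1 by omega, show p + n + 1 + 1 = p + n + 2 by omega, h1, h2]
        omega

open Finset in
lemma filter_cons_card (N : ℕ) (P : (Fin (N + 1) → Fin 3) → Prop) [DecidablePred P] :
    (univ.filter P).card = ∑ a : Fin 3,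
      (univ.filter fun g : Fin N → Fin 3 => P (Fin.cons a g)).card := by
  simp only [Finset.card_filter]
  rw [← Equiv.sum_comp (Fin.consEquiv (fun _ => Fin 3)) (fun g => if P g then 1 else 0)]
  rw [Fintype.sum_prod_type]
  rfl

open Finset in
lemma count2_cons (N : ℕ) (a : Fin 3) (g : Fin N → Fin 3) :
    (univ.filter fun i : Fin (N + 1) => Fin.cons (α := fun _ => Fin 3) a g i = 2).card
      = (if a = 2 then 1 else 0) + (univ.filter fun i : Fin N => g i = 2).card := by
  simp only [Finset.card_filter]
  rw [Fin.sum_univ_succ]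
  simp [Fin.cons_zero, Fin.cons_succ]

lemma ofFn_cons {N : ℕ} (a : Fin 3) (g : Fin N → Fin 3) :
    List.ofFn (Fin.cons (α := fun _ => Fin 3) a g) = a :: List.ofFn g := by
  rw [List.ofFn_succ]
  simp

lemma validOBD_cons0 (t : List (Fin 3)) (p : ℕ) (s : Bool) :
    validOBD (0 :: t) p s = validOBD t (p + 1) s := rfl

lemma validOBD_cons1_zero (t : List (Fin 3)) (s : Bool) :
    validOBD (1 :: t) 0 s = (!s && validOBD t 0 s) := rfl

lemma validOBD_cons1_succ (t : List (Fin 3)) (p : ℕ) (s : Bool) :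
    validOBD (1 :: t) (p + 1) s = validOBD t p s := rfl

lemma validOBD_cons2_zero (t : List (Fin 3)) (s : Bool) :
    validOBD (2 :: t) 0 s = validOBD t 0 true := rfl

lemma validOBD_cons2_succ (t : List (Fin 3)) (p : ℕ) (s : Bool) :
    validOBD (2 :: t) (p + 1) s = false := rfl

open Finset in
lemma card_shift {N n : ℕ} (P : (Fin N → Fin 3) → Prop) [DecidablePred P] :
    (univ.filter fun g => 1 + (univ.filter fun i => g i = 2).card = n + 1 ∧ P g).card
      = (univ.filter fun g => (univ.filter fun i => g i = 2).card = n ∧ P g).card := by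
  congr 1
  apply Finset.filter_congr
  intro g _
  constructor <;> rintro ⟨h1, h2⟩ <;> exact ⟨by omega, h2⟩

open Finset in
lemma card_shift0 {N : ℕ} (P : (Fin N → Fin 3) → Prop) [DecidablePred P] :
    (univ.filter fun g => 1 + (univ.filter fun i => g i = 2).card = 0 ∧ P g).card = 0 := by
  rw [Finset.card_eq_zero, Finset.filter_eq_empty_iff]
  rintro g _ ⟨h1, _⟩
  omega

open Finset in
lemma cardD (N : ℕ) : ∀ n p s, (univ.filter fun g : Fin N → Fin 3 =>
      (univ.filter fun i => g i = 2).card = n ∧ validOBD (List.ofFn g) p s = true).card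
      = D N n p s := by
  induction N with
  | zero =>
    intro n p s
    simp only [D]
    by_cases h : n = 0 ∧ p = 0
    · rw [if_pos h, Finset.filter_true_of_mem, Finset.card_univ]
      · simp
      · intro g _
        obtain ⟨h1, h2⟩ := h
        subst h1; subst h2
        simp [validOBD]
    · rw [if_neg h, Finset.card_eq_zero, Finset.filter_eq_empty_iff]
      intro g _
      simp [validOBD]
      omega
  | succ N IH =>
    intro n p s
    rw [filter_cons_card]
    rw [Fin.sum_univ_three]
    simp only [count2_cons, ofFn_cons]
    norm_num
    simp only [show ((0 : Fin 3) = 2) ↔ False by decide, show ((1 : Fin 3) = 2) ↔ False by decide,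
      if_false, Nat.zero_add, true_and]
    rcases p with _ | p
    · simp only [validOBD_cons0, validOBD_cons1_zero, validOBD_cons2_zero]
      norm_num
      cases s
      · simp only [Bool.not_false, Bool.true_and, true_and]
        rcases n with _ | n
        · erw [card_shift0]
          rw [IH 0 1 false, IH 0 0 false]
          simp only [D]
          norm_num
        · erw [card_shift]
          rw [IH (n + 1) 1 false, IH (n + 1) 0 false, IH n 0 true]
          simp only [D]
          norm_num
      · simp only [show (true = false) ↔ False by decide, false_and,
          Finset.filter_false, Finset.card_empty]
        rcases n with _ | n
        · erw [card_shift0]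
          rw [IH 0 1 true]
          simp only [D]
          norm_num
        · erw [card_shift]
          rw [IH (n + 1) 1 true, IH n 0 true]
          simp only [D]
          norm_num
    · simp only [validOBD_cons0, validOBD_cons1_succ, validOBD_cons2_succ]
      simp only [Bool.false_eq_true, and_false, Finset.filter_false, Finset.card_empty]
      erw [IH n (p + 1 + 1) s, IH n p s]
      simp only [D]

open Finset in
lemma card_bool (N k : ℕ) :
    (univ.filter fun f : Fin N → Bool => (univ.filter fun i => f i = false).card = k).card
      = N.choose k := by
  have h : (univ.filter fun f : Fin N → Bool =>
      (univ.filter fun i => f i = false).card = k).card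
        = (Finset.powersetCard k (univ : Finset (Fin N))).card := by
    refine Finset.card_bij' (fun f _ => Finset.univ.filter fun i => f i = false)
      (fun t _ => fun i => decide (i ∉ t)) ?_ ?_ ?_ ?_
    · intro f hf
      simp only [Finset.mem_filter] at hf
      simp [Finset.mem_powersetCard, hf.2]
    · intro t ht
      simp only [Finset.mem_powersetCard] at ht
      simp only [Finset.mem_filter, Finset.mem_univ, true_and]
      have ht2 : (univ.filter fun i => (decide (i ∉ t) : Bool) = false) = t := by
        ext x; simp
      rw [ht2]
      exact ht.2
    · intro f hf
      funext x
      rcases hfx : f x <;> simp [hfx]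
    · intro t ht
      ext x
      simp
  rw [h, Finset.card_powersetCard]
  simp

/-- (a) The number of sequences of `N` symbols from `{'(', ')'}` with an excess
of `n` closing parentheses equals `binom(N, (N-n)/2)` when `N - n` is even.
(b) The number of one-boundary half-diagrams of length `N` with `n` through
lines (left-boundary connections allowed, no right-boundary connections)
equals `B_{N,n}` for `N - n` even and `B_{N,n+1}` for `N - n` odd. -/
theorem one_boundary_halfdiagram_count (N n : ℕ) (hn : n ≤ N) :
    ((N - n) % 2 = 0 →
      (Finset.univ.filter (fun f : Fin N → Bool =>
          (Finset.univ.filter (fun i => f i = true)).card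
            = (Finset.univ.filter (fun i => f i = false)).card + n)).card
        = Nat.choose N ((N - n) / 2)) ∧
    ((N - n) % 2 = 0 →
      (Finset.univ.filter (fun g : Fin N → Fin 3 =>
          (Finset.univ.filter (fun i => g i = 2)).card = n ∧
          validOBD (List.ofFn g) 0 false = true)).card = ballotB N n) ∧
    ((N - n) % 2 = 1 →
      (Finset.univ.filter (fun g : Fin N → Fin 3 =>
          (Finset.univ.filter (fun i => g i = 2)).card = n ∧
          validOBD (List.ofFn g) 0 false = true)).card = ballotB N (n + 1)) := by
  refine ⟨?_, ?_, ?_⟩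
  · intro hpar
    have key : ∀ f : Fin N → Bool,
        ((Finset.univ.filter fun i => f i = true).card
            = (Finset.univ.filter fun i => f i = false).card + n)
          ↔ ((Finset.univ.filter fun i => f i = false).card = (N - n) / 2) := by
      intro f
      have h2 := Finset.card_filter_add_card_filter_not
        (s := (Finset.univ : Finset (Fin N))) (p := fun i => f i = true)
      simp only [Bool.not_eq_true, Finset.card_univ, Fintype.card_fin] at h2
      omega
    rw [Finset.filter_congr fun f _ => key f]
    exact card_bool N ((N - n) / 2)
  · intro hpar
    rw [cardD N n 0 false]
    have hD := (Dclosed N 0 n).2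
    norm_num at hD
    rw [hD, ballotB_zero_of N (n + 1) (by omega)]
    omega
  · intro hpar
    rw [cardD N n 0 false]
    have hD := (Dclosed N 0 n).2
    norm_num at hD
    rw [hD, ballotB_zero_of N n (by omega)]
    omega
end

section
/- In the Hecke algebra of type A with Murphy elements J_i as above, every completely symmetric polynomial in J_1, ..., J_{N-1} is central. -/
section HeckeAux

variable {A : Type*} [Ring A]

lemma hecke_aux_powsum (g x y : A) (hxy : Commute x y) (hs : Commute g (x + y))
    (hp : Commute g (x * y)) : ∀ m : ℕ, Commute g (x ^ m + y ^ m) := by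
  intro m
  induction m using Nat.strong_induction_on with
  | _ m ih =>
    match m with
    | 0 => simpa using (Commute.one_right g).add_right (Commute.one_right g)
    | 1 => simpa using hs
    | (m + 2) =>
      have e1 : x * y * x ^ m = x ^ (m+1) * y := by
        rw [mul_assoc, (hxy.symm.pow_right m).eq, ← mul_assoc, ← pow_succ']
      have e2 : y * x ^ (m+1) = x ^ (m+1) * y := (hxy.symm.pow_right (m+1)).eq
      have e3 : x * y * y ^ m = x * y ^ (m+1) := by
        rw [mul_assoc, ← pow_succ']
      have h1 : x ^ (m + 2) + y ^ (m + 2)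
          = (x + y) * (x ^ (m + 1) + y ^ (m + 1)) - x * y * (x ^ m + y ^ m) := by
        rw [mul_add (x*y), e1, e3, add_mul, mul_add, mul_add, e2,
          ← pow_succ', ← pow_succ']
        abel
      rw [h1]
      exact ((hs.mul_right (ih (m+1) (by omega))).sub_right
        (hp.mul_right (ih m (by omega))))

lemma hecke_aux_sym2 (g x y : A) (hxy : Commute x y) (hs : Commute g (x + y))
    (hp : Commute g (x * y)) (a b : ℕ) : Commute g (x ^ a * y ^ b + x ^ b * y ^ a) := by
  have key : ∀ a b : ℕ, a ≤ b → Commute g (x ^ a * y ^ b + x ^ b * y ^ a) := by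
    intro a b hab
    have h1 : x ^ a * y ^ b + x ^ b * y ^ a
        = (x * y) ^ a * (x ^ (b - a) + y ^ (b - a)) := by
      rw [hxy.mul_pow, mul_add]
      have h2 : x ^ a * y ^ a * x ^ (b-a) = x ^ b * y ^ a := by
        rw [mul_assoc, ((hxy.symm).pow_pow a (b-a)).eq, ← mul_assoc, ← pow_add]
        congr 2
        omega
      rw [h2, mul_assoc, ← pow_add]
      have h3 : a + (b - a) = b := by omega
      rw [h3, add_comm]
    rw [h1]
    exact (hp.pow_right a).mul_right (hecke_aux_powsum g x y hxy hs hp _)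
  rcases le_total a b with h | h
  · exact key a b h
  · have := key b a h
    rwa [add_comm] at this

lemma hecke_aux_braid_conj (g h x : A) (hbr : g*h*g = h*g*h) (hx : Commute h x) :
    Commute g (h*(g*x*g)*h) := by
  show g * (h*(g*x*g)*h) = (h*(g*x*g)*h) * g
  calc g*(h*(g*x*g)*h) = (g*h*g)*(x*(g*h)) := by noncomm_ring
    _ = (h*g*h)*(x*(g*h)) := by rw [hbr]
    _ = (h*g)*((h*x)*(g*h)) := by noncomm_ring
    _ = (h*g)*((x*h)*(g*h)) := by rw [hx.eq]
    _ = (h*g*x)*(h*g*h) := by noncomm_ring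
    _ = (h*g*x)*(g*h*g) := by rw [← hbr]
    _ = (h*(g*x*g)*h)*g := by noncomm_ring

lemma hecke_aux_adj_step (g h x : A) (hbr : g*h*g = h*g*h) (hx : Commute h x)
    (hprev : Commute x (g*x*g)) : Commute (g*x*g) (h*(g*x*g)*h) := by
  show (g*x*g) * (h*(g*x*g)*h) = (h*(g*x*g)*h) * (g*x*g)
  have hL : (g*x*g) * (h*(g*x*g)*h) = (g*h*g)*((x*g*x)*(h*g)) := by
    calc (g*x*g) * (h*(g*x*g)*h) = (g*x)*((g*h*g)*(x*(g*h))) := by noncomm_ring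
      _ = (g*x)*((h*g*h)*(x*(g*h))) := by rw [hbr]
      _ = ((g*x)*(h*g))*((h*x)*(g*h)) := by noncomm_ring
      _ = ((g*x)*(h*g))*((x*h)*(g*h)) := by rw [hx.eq]
      _ = (g*(x*h))*((g*x)*(h*(g*h))) := by noncomm_ring
      _ = (g*(h*x))*((g*x)*(h*(g*h))) := by rw [← hx.eq]
      _ = ((g*h)*(x*(g*x)))*(h*g*h) := by noncomm_ring
      _ = ((g*h)*(x*(g*x)))*(g*h*g) := by rw [← hbr]
      _ = (g*h)*((x*(g*x*g))*(h*g)) := by noncomm_ring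
      _ = (g*h)*(((g*x*g)*x)*(h*g)) := by rw [hprev.eq]
      _ = (g*h*g)*((x*g*x)*(h*g)) := by noncomm_ring
  have hR : (h*(g*x*g)*h) * (g*x*g) = (g*h*g)*((x*g*x)*(h*g)) := by
    calc (h*(g*x*g)*h) * (g*x*g) = (h*(g*x))*((g*h*g)*(x*g)) := by noncomm_ring
      _ = (h*(g*x))*((h*g*h)*(x*g)) := by rw [hbr]
      _ = ((h*g)*(x*(h*g)))*((h*x)*g) := by noncomm_ring
      _ = ((h*g)*(x*(h*g)))*((x*h)*g) := by rw [hx.eq]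
      _ = (h*g)*((x*h)*(g*(x*(h*g)))) := by noncomm_ring
      _ = (h*g)*((h*x)*(g*(x*(h*g)))) := by rw [← hx.eq]
      _ = (h*g*h)*((x*g*x)*(h*g)) := by noncomm_ring
      _ = (g*h*g)*((x*g*x)*(h*g)) := by rw [← hbr]
  rw [hL, hR]

lemma hecke_aux_prodcomm (g x : A) (hadj : Commute x (g * x * g)) :
    Commute g (x * (g * x * g)) := by
  show g * (x * (g * x * g)) = (x * (g * x * g)) * g
  calc g * (x * (g * x * g)) = ((g * x * g) * x) * g := by noncomm_ring
    _ = (x * (g * x * g)) * g := by rw [hadj.eq]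

end HeckeAux

section HeckeAuxAlg

variable {A : Type*} [Ring A] [Algebra ℂ A]

lemma hecke_aux_quad (q : ℂ) (hq : q ≠ 0) (x : A)
    (h : (x - algebraMap ℂ A q) * (x + algebraMap ℂ A q⁻¹) = 0) :
    x * x = (q - q⁻¹) • x + 1 := by
  have h1 : x * algebraMap ℂ A q⁻¹ = q⁻¹ • x := by
    rw [← Algebra.commutes, Algebra.smul_def]
  have h2 : algebraMap ℂ A q * x = q • x := (Algebra.smul_def q x).symm
  have h3 : (algebraMap ℂ A q) * algebraMap ℂ A q⁻¹ = 1 := by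
    rw [← map_mul, mul_inv_cancel₀ hq, map_one]
  have h4 : x * x + q⁻¹ • x - q • x - 1 = 0 := by
    rw [← h1, ← h2, ← h3, ← h]; noncomm_ring
  have h5 : x * x = x * x + q⁻¹ • x - q • x - 1 + (q • x - q⁻¹ • x + 1) := by abel
  rw [sub_smul, h5, h4, zero_add]

lemma hecke_aux_sumcomm (γ : ℂ) (g x : A) (hg : g * g = γ • g + 1) :
    Commute g (x + g * x * g) := by
  show g * (x + g * x * g) = (x + g * x * g) * g
  have h1 : g * (x + g * x * g) = g * x + (g * g) * (x * g) := by noncomm_ring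
  have h2 : (x + g * x * g) * g = x * g + (g * x) * (g * g) := by noncomm_ring
  rw [h1, h2, hg]
  simp only [add_mul, mul_add, one_mul, mul_one, smul_mul_assoc, mul_smul_comm, mul_assoc]
  module

lemma hecke_aux_adj_base (γ : ℂ) (a b : A) (ha : a*a = γ•a + 1) (hb : b*b = γ•b + 1)
    (hbr : a*b*a = b*a*b) : Commute (a*a) (b*(a*a)*b) := by
  show (a*a)*(b*(a*a)*b) = (b*(a*a)*b)*(a*a)
  have hL1 : (a*a)*(b*(a*a)*b) = (a*(b*b))*(a*(b*b)) := by
    calc (a*a)*(b*(a*a)*b) = (a*(a*b*a))*(a*b) := by noncomm_ring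
      _ = (a*(b*a*b))*(a*b) := by rw [hbr]
      _ = ((a*b)*(a*b*a))*b := by noncomm_ring
      _ = ((a*b)*(b*a*b))*b := by rw [hbr]
      _ = (a*(b*b))*(a*(b*b)) := by noncomm_ring
  have hR1 : (b*(a*a)*b)*(a*a) = (b*b)*(a*((b*b)*a)) := by
    calc (b*(a*a)*b)*(a*a) = ((b*a)*(a*b*a))*a := by noncomm_ring
      _ = ((b*a)*(b*a*b))*a := by rw [hbr]
      _ = (b*(a*b*a))*(b*a) := by noncomm_ring
      _ = (b*(b*a*b))*(b*a) := by rw [hbr]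
      _ = (b*b)*(a*((b*b)*a)) := by noncomm_ring
  have W0 : b*(a*b) = a*(b*a) := by rw [← mul_assoc, ← hbr, mul_assoc]
  have W1 : a*(b*(a*b)) = γ•(b*(a*b)) + b*a := by
    calc a*(b*(a*b)) = ((a*b)*a)*b := by noncomm_ring
      _ = ((b*a)*b)*b := by rw [hbr]
      _ = (b*a)*(b*b) := by noncomm_ring
      _ = (b*a)*(γ•b+1) := by rw [hb]
      _ = γ•(b*(a*b)) + b*a := by rw [mul_add, mul_one, mul_smul_comm, mul_assoc]
  have W2 : b*(a*(b*a)) = γ•(a*(b*a)) + a*b := by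
    calc b*(a*(b*a)) = ((b*a)*b)*a := by noncomm_ring
      _ = ((a*b)*a)*a := by rw [← hbr]
      _ = (a*b)*(a*a) := by noncomm_ring
      _ = (a*b)*(γ•a+1) := by rw [ha]
      _ = γ•(a*(b*a)) + a*b := by rw [mul_add, mul_one, mul_smul_comm, mul_assoc]
  have W3 : a*(a*b) = γ•(a*b) + b := by
    calc a*(a*b) = (a*a)*b := by rw [mul_assoc]
      _ = (γ•a+1)*b := by rw [ha]
      _ = γ•(a*b) + b := by rw [add_mul, one_mul, smul_mul_assoc]
  have W4 : b*(a*a) = γ•(b*a) + b := by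
    rw [ha, mul_add, mul_one, mul_smul_comm]
  rw [hL1, hR1, hb]
  simp only [mul_add, add_mul, mul_one, one_mul, mul_smul_comm, smul_mul_assoc, smul_add,
    smul_smul, mul_assoc]
  rw [W1, W2, W3, W4, W0]
  simp only [smul_add, smul_smul]
  module

end HeckeAuxAlg

section HeckeLists

lemma hecke_aux_take_ofFn {α : Type*} {n : ℕ} (p : ℕ) (hp : p ≤ n) (f : Fin n → α) :
    (List.ofFn f).take p = List.ofFn (fun i : Fin p => f (Fin.castLE hp i)) := by
  apply List.ext_getElem
  · simp [Nat.min_eq_left hp]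
  · intro i h1 h2
    simp [List.getElem_take, Fin.castLE]

lemma hecke_aux_drop_ofFn {α : Type*} {n : ℕ} (p : ℕ) (hp : p ≤ n) (f : Fin n → α) :
    (List.ofFn f).drop p = List.ofFn (fun i : Fin (n - p) => f ⟨p + i, by omega⟩) := by
  apply List.ext_getElem
  · simp
  · intro i h1 h2
    simp [List.getElem_drop]

lemma hecke_aux_split {M : Type*} [Monoid M] {n : ℕ} (p : ℕ) (hp : p + 1 < n)
    (f : Fin n → M) :
    (List.ofFn f).prod
      = (List.ofFn (fun i : Fin p =>
            f (Fin.castLE (Nat.le_of_lt (Nat.lt_of_succ_lt hp)) i))).prod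
        * (f ⟨p, Nat.lt_of_succ_lt hp⟩ * (f ⟨p + 1, hp⟩
          * (List.ofFn (fun i : Fin (n - (p + 2)) =>
              f ⟨p + 2 + (i : ℕ), Nat.add_lt_of_lt_sub' i.isLt⟩)).prod)) := by
  conv_lhs => rw [← List.take_append_drop p (List.ofFn f)]
  rw [List.prod_append, hecke_aux_take_ofFn p (Nat.le_of_lt (Nat.lt_of_succ_lt hp))]
  congr 1
  have h1 : p < (List.ofFn f).length := by simp; omega
  rw [List.drop_eq_getElem_cons h1]
  have h2 : p + 1 < (List.ofFn f).length := by simp; omega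
  rw [List.drop_eq_getElem_cons h2]
  rw [hecke_aux_drop_ofFn (p + 2) (by omega)]
  simp only [List.prod_cons, List.getElem_ofFn]

end HeckeLists

lemma hecke_aux_pair {A : Type*} [Ring A] {n : ℕ} (G : A) (u : ℕ → A) (m : ℕ)
    (hmn : m + 1 < n) (e e' : Fin n → ℕ)
    (heq : ∀ i : Fin n, (i : ℕ) ≠ m → (i : ℕ) ≠ m + 1 → e i = e' i)
    (h1 : e ⟨m, Nat.lt_of_succ_lt hmn⟩ = e' ⟨m + 1, hmn⟩)
    (h2 : e ⟨m + 1, hmn⟩ = e' ⟨m, Nat.lt_of_succ_lt hmn⟩)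
    (hcl : ∀ i : ℕ, i < m → Commute G (u (i + 1)))
    (hcr : ∀ i : ℕ, m + 1 < i → i < n → Commute G (u (i + 1)))
    (hpair : ∀ a b : ℕ,
      Commute G (u (m + 1) ^ a * u (m + 2) ^ b + u (m + 1) ^ b * u (m + 2) ^ a)) :
    G * ((List.ofFn fun i : Fin n => u ((i : ℕ) + 1) ^ e i).prod
        + (List.ofFn fun i : Fin n => u ((i : ℕ) + 1) ^ e' i).prod)
      = ((List.ofFn fun i : Fin n => u ((i : ℕ) + 1) ^ e i).prod
        + (List.ofFn fun i : Fin n => u ((i : ℕ) + 1) ^ e' i).prod) * G := by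
  have hsp := hecke_aux_split m hmn (fun i : Fin n => u ((i : ℕ) + 1) ^ e i)
  have hsp' := hecke_aux_split m hmn (fun i : Fin n => u ((i : ℕ) + 1) ^ e' i)
  dsimp only at hsp hsp'
  rw [hsp, hsp']
  have hT : (List.ofFn fun i : Fin m =>
        u ((Fin.castLE (Nat.le_of_lt (Nat.lt_of_succ_lt hmn)) i : ℕ) + 1)
          ^ e' (Fin.castLE (Nat.le_of_lt (Nat.lt_of_succ_lt hmn)) i)).prod
      = (List.ofFn fun i : Fin m =>
        u ((Fin.castLE (Nat.le_of_lt (Nat.lt_of_succ_lt hmn)) i : ℕ) + 1)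
          ^ e (Fin.castLE (Nat.le_of_lt (Nat.lt_of_succ_lt hmn)) i)).prod := by
    apply congrArg List.prod
    apply congrArg
    funext i
    have hi : (i : ℕ) < m := i.isLt
    rw [heq (Fin.castLE (Nat.le_of_lt (Nat.lt_of_succ_lt hmn)) i)
      (by simp only [Fin.coe_castLE]; omega) (by simp only [Fin.coe_castLE]; omega)]
  have hD : (List.ofFn fun i : Fin (n - (m + 2)) =>
        u ((m + 2 + (i : ℕ)) + 1) ^ e' ⟨m + 2 + (i : ℕ), Nat.add_lt_of_lt_sub' i.isLt⟩).prod
      = (List.ofFn fun i : Fin (n - (m + 2)) =>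
        u ((m + 2 + (i : ℕ)) + 1) ^ e ⟨m + 2 + (i : ℕ), Nat.add_lt_of_lt_sub' i.isLt⟩).prod := by
    apply congrArg List.prod
    apply congrArg
    funext i
    rw [heq ⟨m + 2 + (i : ℕ), Nat.add_lt_of_lt_sub' i.isLt⟩ (by simp; omega) (by simp; omega)]
  rw [hT, hD, ← h1, ← h2]
  set T := (List.ofFn fun i : Fin m =>
      u ((Fin.castLE (Nat.le_of_lt (Nat.lt_of_succ_lt hmn)) i : ℕ) + 1)
        ^ e (Fin.castLE (Nat.le_of_lt (Nat.lt_of_succ_lt hmn)) i)).prod with hTdef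
  set D := (List.ofFn fun i : Fin (n - (m + 2)) =>
      u ((m + 2 + (i : ℕ)) + 1) ^ e ⟨m + 2 + (i : ℕ), Nat.add_lt_of_lt_sub' i.isLt⟩).prod
    with hDdef
  set a := e ⟨m, Nat.lt_of_succ_lt hmn⟩
  set b := e ⟨m + 1, hmn⟩
  have hfact : T * (u (m + 1) ^ a * (u (m + 2) ^ b * D))
        + T * (u (m + 1) ^ b * (u (m + 2) ^ a * D))
      = T * ((u (m + 1) ^ a * u (m + 2) ^ b + u (m + 1) ^ b * u (m + 2) ^ a) * D) := by
    rw [← mul_add]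
    congr 1
    rw [add_mul, mul_assoc, mul_assoc]
  rw [hfact]
  have hCT : Commute G T := by
    rw [hTdef]
    apply Commute.list_prod_right
    intro z hz
    rw [List.mem_ofFn] at hz
    obtain ⟨i, rfl⟩ := hz
    exact (hcl (i : ℕ) i.isLt).pow_right _
  have hCD : Commute G D := by
    rw [hDdef]
    apply Commute.list_prod_right
    intro z hz
    rw [List.mem_ofFn] at hz
    obtain ⟨i, rfl⟩ := hz
    exact (hcr (m + 2 + (i : ℕ)) (by omega) (Nat.add_lt_of_lt_sub' i.isLt)).pow_right _
  exact hCT.mul_right ((hpair a b).mul_right hCD)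

/-- In the type A Hecke algebra with Murphy elements `J i`, every completely
symmetric polynomial in `J 1, ..., J (N-1)` is central: the symmetrization of
any monomial `∏ i, J i ^ d i` over all permutations of the variables commutes
with every generator `g k` (and symmetrized monomials span all symmetric
polynomials). -/
theorem heckeA_symmetric_murphy_central (A : Type*) [Ring A] [Algebra ℂ A]
    (N : ℕ) (q : ℂ) (hq : q ≠ 0) (g J : ℕ → A)
    (hbraid : ∀ i, 1 ≤ i → i + 1 ≤ N - 1 →
      g i * g (i + 1) * g i = g (i + 1) * g i * g (i + 1))
    (hcomm : ∀ i j, 1 ≤ i → i ≤ N - 1 → 1 ≤ j → j ≤ N - 1 → i + 1 < j →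
      g i * g j = g j * g i)
    (hquad : ∀ i, 1 ≤ i → i ≤ N - 1 →
      (g i - algebraMap ℂ A q) * (g i + algebraMap ℂ A q⁻¹) = 0)
    (hJ1 : J 1 = g 1 ^ 2)
    (hJ : ∀ i, 2 ≤ i → i ≤ N - 1 → J i = g i * J (i - 1) * g i) :
    ∀ (d : Fin (N - 1) → ℕ) (k : ℕ), 1 ≤ k → k ≤ N - 1 →
      g k * (∑ σ : Equiv.Perm (Fin (N - 1)),
          (List.ofFn (fun i : Fin (N - 1) => J ((i : ℕ) + 1) ^ d (σ i))).prod)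
        = (∑ σ : Equiv.Perm (Fin (N - 1)),
          (List.ofFn (fun i : Fin (N - 1) => J ((i : ℕ) + 1) ^ d (σ i))).prod) * g k := by
  intro d k hk1 hk2
  have hγ : ∀ i, 1 ≤ i → i ≤ N - 1 → g i * g i = (q - q⁻¹) • g i + 1 :=
    fun i h1 h2 => hecke_aux_quad q hq (g i) (hquad i h1 h2)
  -- distant commutation: `g k'` commutes with `J j` for `j + 2 ≤ k'`
  have C2 : ∀ j, 1 ≤ j → ∀ k', j + 2 ≤ k' → k' ≤ N - 1 → Commute (g k') (J j) := by
    intro j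
    induction j with
    | zero => intro h; exact absurd h (by omega)
    | succ j ih =>
      intro _ k' hk'1 hk'2
      by_cases hj0 : j = 0
      · subst hj0
        have hgg : Commute (g k') (g 1) :=
          (hcomm 1 k' (by omega) (by omega) (by omega) hk'2 (by omega)).symm
        rw [hJ1]
        exact hgg.pow_right 2
      · have hJj : J (j + 1) = g (j + 1) * J j * g (j + 1) := by
          simpa using hJ (j + 1) (by omega) (by omega)
        rw [hJj]
        have hgg : Commute (g k') (g (j + 1)) :=
          (hcomm (j + 1) k' (by omega) (by omega) (by omega) hk'2 (by omega)).symm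
        exact (hgg.mul_right (ih (by omega) k' (by omega) hk'2)).mul_right hgg
  -- `g k'` commutes with `J j` for `j ≥ k' + 1`
  have C3 : ∀ k', 1 ≤ k' → k' ≤ N - 1 → ∀ j, k' + 1 ≤ j → j ≤ N - 1 →
      Commute (g k') (J j) := by
    intro k' hk'1 hk'N j hj
    induction j, hj using Nat.le_induction with
    | base =>
      intro hjN
      have hJk1 : J (k' + 1) = g (k' + 1) * J k' * g (k' + 1) := by
        simpa using hJ (k' + 1) (by omega) (by omega)
      by_cases hk'e : k' = 1
      · subst hk'e
        have hbr := hbraid 1 (by omega) (by omega)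
        have hcon := hecke_aux_braid_conj (g 1) (g 2) 1 hbr (Commute.one_right _)
        rw [mul_one, ← pow_two] at hcon
        rw [hJk1, hJ1]
        exact hcon
      · have hJk : J k' = g k' * J (k' - 1) * g k' := hJ k' (by omega) (by omega)
        have hbr := hbraid k' (by omega) (by omega)
        have hx : Commute (g (k' + 1)) (J (k' - 1)) :=
          C2 (k' - 1) (by omega) (k' + 1) (by omega) (by omega)
        have hcon := hecke_aux_braid_conj (g k') (g (k' + 1)) (J (k' - 1)) hbr hx
        rw [hJk1, hJk]
        exact hcon
    | succ j hj ih =>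
      intro hjN
      have hJj : J (j + 1) = g (j + 1) * J j * g (j + 1) := by
        simpa using hJ (j + 1) (by omega) (by omega)
      have hgg : Commute (g k') (g (j + 1)) :=
        hcomm k' (j + 1) hk'1 hk'N (by omega) (by omega) (by omega)
      rw [hJj]
      exact (hgg.mul_right (ih (by omega))).mul_right hgg
  -- adjacent Murphy elements commute
  have C6 : ∀ k', 2 ≤ k' → k' ≤ N - 1 → Commute (J (k' - 1)) (J k') := by
    intro k'
    induction k' using Nat.strong_induction_on with
    | _ k' ih =>
      intro hk'2 hk'N
      by_cases h2 : k' = 2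
      · subst h2
        have ha := hγ 1 (by omega) (by omega)
        have hb := hγ 2 (by omega) (by omega)
        have hbr := hbraid 1 (by omega) (by omega)
        have hbase := hecke_aux_adj_base (q - q⁻¹) (g 1) (g 2) ha hb hbr
        have hJ2 : J 2 = g 2 * J 1 * g 2 := by simpa using hJ 2 (by omega) (by omega)
        show Commute (J 1) (J 2)
        rw [hJ2, hJ1, pow_two]
        exact hbase
      · have hbr0 := hbraid (k' - 1) (by omega) (by omega)
        have e : k' - 1 + 1 = k' := by omega
        rw [e] at hbr0
        have hx : Commute (g k') (J (k' - 2)) := C2 (k' - 2) (by omega) k' (by omega) hk'N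
        have hprev0 : Commute (J (k' - 2)) (J (k' - 1)) := by
          have := ih (k' - 1) (by omega) (by omega) (by omega)
          rwa [show k' - 1 - 1 = k' - 2 from by omega] at this
        have hJk : J k' = g k' * J (k' - 1) * g k' := hJ k' (by omega) hk'N
        have hJk1 : J (k' - 1) = g (k' - 1) * J (k' - 2) * g (k' - 1) := by
          have := hJ (k' - 1) (by omega) (by omega)
          rwa [show k' - 1 - 1 = k' - 2 from by omega] at this
        have hprev : Commute (J (k' - 2)) (g (k' - 1) * J (k' - 2) * g (k' - 1)) := by
          rw [← hJk1]; exact hprev0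
        have hstep := hecke_aux_adj_step (g (k' - 1)) (g k') (J (k' - 2)) hbr0 hx hprev
        rw [hJk, hJk1]
        exact hstep
  rcases Nat.lt_or_ge k 2 with hklt | hkge
  · -- k = 1 : g 1 commutes with every J j
    have hk : k = 1 := by omega
    subst hk
    have hall : ∀ j : Fin (N - 1), Commute (g 1) (J ((j : ℕ) + 1)) := by
      intro j
      have hjN : (j : ℕ) < N - 1 := j.isLt
      by_cases hj : (j : ℕ) = 0
      · rw [hj, hJ1]
        exact (Commute.refl _).pow_right 2
      · exact C3 1 (by omega) (by omega) ((j : ℕ) + 1) (by omega) (by omega)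
    exact Commute.sum_right _ _ _ (fun σ _ =>
      Commute.list_prod_right _ _ (fun x hx => by
        rw [List.mem_ofFn] at hx
        obtain ⟨i, rfl⟩ := hx
        exact (hall i).pow_right _))
  · -- k ≥ 2 : pair permutations via the transposition of positions k-2, k-1
    obtain ⟨m, rfl⟩ : ∃ m, k = m + 2 := ⟨k - 2, by omega⟩
    have hmn : m + 1 < N - 1 := by omega
    set pp : Fin (N - 1) := ⟨m, Nat.lt_of_succ_lt hmn⟩ with hppdef
    set pq : Fin (N - 1) := ⟨m + 1, hmn⟩ with hpqdef
    set τ : Equiv.Perm (Fin (N - 1)) := Equiv.swap pp pq with hτdef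
    set F : Equiv.Perm (Fin (N - 1)) → A := fun σ =>
      (List.ofFn (fun i : Fin (N - 1) => J ((i : ℕ) + 1) ^ d (σ i))).prod with hFdef
    have hxy : Commute (J (m + 1)) (J (m + 2)) := by
      have := C6 (m + 2) (by omega) hk2
      simpa using this
    have hJm2 : J (m + 2) = g (m + 2) * J (m + 1) * g (m + 2) := by
      simpa using hJ (m + 2) (by omega) hk2
    have hs : Commute (g (m + 2)) (J (m + 1) + J (m + 2)) := by
      rw [hJm2]
      exact hecke_aux_sumcomm (q - q⁻¹) _ _ (hγ (m + 2) (by omega) hk2)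
    have hp : Commute (g (m + 2)) (J (m + 1) * J (m + 2)) := by
      rw [hJm2]
      refine hecke_aux_prodcomm _ _ ?_
      rw [← hJm2]
      exact hxy
    have hpair : ∀ a b : ℕ,
        Commute (g (m + 2)) (J (m + 1) ^ a * J (m + 2) ^ b + J (m + 1) ^ b * J (m + 2) ^ a) :=
      fun a b => hecke_aux_sym2 _ _ _ hxy hs hp a b
    have key : ∀ σ : Equiv.Perm (Fin (N - 1)),
        g (m + 2) * (F σ + F (σ * τ)) = (F σ + F (σ * τ)) * g (m + 2) := by
      intro σ
      refine hecke_aux_pair (g (m + 2)) J m hmn (fun i => d (σ i)) (fun i => d ((σ * τ) i))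
        ?_ ?_ ?_ ?_ ?_ hpair
      · intro i hi1 hi2
        have : τ i = i := by
          rw [hτdef]
          exact Equiv.swap_apply_of_ne_of_ne (Fin.ne_of_val_ne hi1) (Fin.ne_of_val_ne hi2)
        show d (σ i) = d (σ (τ i))
        rw [this]
      · show d (σ pp) = d (σ (τ pq))
        rw [hτdef, Equiv.swap_apply_right]
      · show d (σ pq) = d (σ (τ pp))
        rw [hτdef, Equiv.swap_apply_left]
      · intro i hi
        exact C2 (i + 1) (by omega) (m + 2) (by omega) hk2
      · intro i hi1 hi2
        exact C3 (m + 2) (by omega) hk2 (i + 1) (by omega) (by omega)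
    have hre : (∑ σ : Equiv.Perm (Fin (N - 1)), F (σ * τ) * g (m + 2))
        = ∑ σ : Equiv.Perm (Fin (N - 1)), F σ * g (m + 2) :=
      Fintype.sum_equiv (Equiv.mulRight τ) _ _ (fun σ => rfl)
    have hre2 : (∑ σ : Equiv.Perm (Fin (N - 1)), g (m + 2) * F (σ * τ))
        = ∑ σ : Equiv.Perm (Fin (N - 1)), g (m + 2) * F σ :=
      Fintype.sum_equiv (Equiv.mulRight τ) _ _ (fun σ => rfl)
    have hdouble : (∑ σ : Equiv.Perm (Fin (N - 1)), g (m + 2) * F σ)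
          + (∑ σ : Equiv.Perm (Fin (N - 1)), g (m + 2) * F σ)
        = (∑ σ : Equiv.Perm (Fin (N - 1)), F σ * g (m + 2))
          + (∑ σ : Equiv.Perm (Fin (N - 1)), F σ * g (m + 2)) := by
      calc (∑ σ : Equiv.Perm (Fin (N - 1)), g (m + 2) * F σ)
            + (∑ σ : Equiv.Perm (Fin (N - 1)), g (m + 2) * F σ)
          = (∑ σ : Equiv.Perm (Fin (N - 1)), g (m + 2) * F σ)
            + (∑ σ : Equiv.Perm (Fin (N - 1)), g (m + 2) * F (σ * τ)) := by rw [hre2]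
        _ = ∑ σ : Equiv.Perm (Fin (N - 1)), (g (m + 2) * F σ + g (m + 2) * F (σ * τ)) :=
            (Finset.sum_add_distrib).symm
        _ = ∑ σ : Equiv.Perm (Fin (N - 1)), (F σ * g (m + 2) + F (σ * τ) * g (m + 2)) :=
            Finset.sum_congr rfl (fun σ _ => by rw [← mul_add, key σ, add_mul])
        _ = (∑ σ : Equiv.Perm (Fin (N - 1)), F σ * g (m + 2))
            + (∑ σ : Equiv.Perm (Fin (N - 1)), F (σ * τ) * g (m + 2)) :=
            Finset.sum_add_distrib
        _ = (∑ σ : Equiv.Perm (Fin (N - 1)), F σ * g (m + 2))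
            + (∑ σ : Equiv.Perm (Fin (N - 1)), F σ * g (m + 2)) := by rw [hre]
    have h2s : (2 : ℂ) • (∑ σ : Equiv.Perm (Fin (N - 1)), g (m + 2) * F σ)
        = (2 : ℂ) • (∑ σ : Equiv.Perm (Fin (N - 1)), F σ * g (m + 2)) := by
      rw [two_smul, two_smul]
      exact hdouble
    have hfin : (∑ σ : Equiv.Perm (Fin (N - 1)), g (m + 2) * F σ)
        = ∑ σ : Equiv.Perm (Fin (N - 1)), F σ * g (m + 2) := by
      have hcg := congrArg (fun z : A => (2 : ℂ)⁻¹ • z) h2s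
      simpa [smul_smul, inv_mul_cancel₀ (two_ne_zero (α := ℂ))] using hcg
    show g (m + 2) * (∑ σ : Equiv.Perm (Fin (N - 1)), F σ)
        = (∑ σ : Equiv.Perm (Fin (N - 1)), F σ) * g (m + 2)
    rw [Finset.mul_sum, Finset.sum_mul]
    exact hfin
end
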